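/- For every function f : ℝ → ℝ and every real t ≥ 0, ∑_{s₂=1}^{⌊t⌋} ∑_{s₁=1}^{⌊t⌋−s₂} (−1)^{s₁}·i^{s₁+s₂}·f(t − s₁ − s₂) = ∑_{s=1}^{⌊t/2⌋} (−1)^{s−1}·f(t − 2s), as an identity of complex numbers (the real values f(·) being regarded as complex numbers and i denoting the imaginary unit). (Both sides arise as particular solutions of y(t+2) + y(t) = f(t), obtained respectively by factoring E² + I = (E − iI)(E + iI) and by taking shift h = 2 with λ = −1.) -/

import Mathlib

open Finset

private lemma icc_map (n : ℕ) :
    Icc (1:ℤ) (n:ℤ) = (Icc 1 n).map ⟨(Nat.cast : ℕ → ℤ), fun a b => by omega⟩ := by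
  ext x
  simp only [mem_Icc, mem_map, Function.Embedding.coeFn_mk]
  constructor
  · rintro ⟨h1, h2⟩; exact ⟨x.toNat, by omega, by show ((x.toNat : ℕ) : ℤ) = x; omega⟩
  · rintro ⟨a, ⟨h1, h2⟩, rfl⟩; show 1 ≤ (a:ℤ) ∧ (a:ℤ) ≤ n; omega

private lemma int_sum_eq (F : ℤ → ℂ) (n : ℕ) :
    ∑ s ∈ Icc (1:ℤ) (n:ℤ), F s = ∑ s ∈ Icc 1 n, F (s:ℤ) := by
  rw [icc_map, Finset.sum_map]; rfl

private lemma alt_sum (n : ℕ) :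
    ∑ s₂ ∈ Icc 1 n, (-1:ℂ)^(n+1-s₂) = if Even n then 0 else -1 := by
  induction n with
  | zero => simp
  | succ n ih =>
    rw [Finset.sum_Icc_succ_top (by omega : 1 ≤ n+1)]
    have : ∀ s₂ ∈ Icc 1 n, (-1:ℂ)^(n+1+1-s₂) = -(-1:ℂ)^(n+1-s₂) := by
      intro s₂ hs₂
      simp only [mem_Icc] at hs₂
      rw [show n+1+1-s₂ = (n+1-s₂)+1 by omega, pow_succ]
      ring
    rw [Finset.sum_congr rfl this, Finset.sum_neg_distrib, ih]
    rcases Nat.even_or_odd n with h | h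
    · simp [h, Nat.even_add_one, show n+1+1-(n+1) = 1 by omega]
    · simp [Nat.not_even_iff_odd.mpr h, Nat.even_add_one, show n+1+1-(n+1) = 1 by omega]

private lemma key (g : ℕ → ℂ) (n : ℕ) :
    ∑ s₂ ∈ Icc 1 n, ∑ s₁ ∈ Icc 1 (n - s₂), (-1:ℂ)^s₁ * Complex.I^(s₁+s₂) * g (s₁+s₂)
      = ∑ s ∈ Icc 1 (n/2), (-1:ℂ)^(s-1) * g (2*s) := by
  induction n with
  | zero => simp
  | succ n ih =>
    rw [Finset.sum_Icc_succ_top (by omega : 1 ≤ n+1)]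
    have h1 : ∀ s₂ ∈ Icc 1 n,
        ∑ s₁ ∈ Icc 1 (n + 1 - s₂), (-1:ℂ)^s₁ * Complex.I^(s₁+s₂) * g (s₁+s₂)
          = (∑ s₁ ∈ Icc 1 (n - s₂), (-1:ℂ)^s₁ * Complex.I^(s₁+s₂) * g (s₁+s₂))
            + (-1:ℂ)^(n+1-s₂) * (Complex.I^(n+1) * g (n+1)) := by
      intro s₂ hs₂
      simp only [mem_Icc] at hs₂
      rw [show n + 1 - s₂ = (n - s₂) + 1 by omega,
        Finset.sum_Icc_succ_top (by omega : 1 ≤ n - s₂ + 1),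
        show n - s₂ + 1 + s₂ = n + 1 by omega, show n - s₂ + 1 = n + 1 - s₂ by omega]
      ring
    rw [Finset.sum_congr rfl h1, Finset.sum_add_distrib, ← Finset.sum_mul, alt_sum, ih,
      show n + 1 - (n+1) = 0 by omega]
    rcases Nat.even_or_odd n with h | h
    · obtain ⟨m, rfl⟩ := h
      simp [Even.add_self, show (m+m+1)/2 = (m+m)/2 by omega]
    · have hodd : ¬ Even n := Nat.not_even_iff_odd.mpr h
      obtain ⟨m, hm⟩ := h
      have h2 : (n+1)/2 = n/2 + 1 := by omega
      have h3 : 2 * (n/2 + 1) = n + 1 := by omega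
      rw [h2, Finset.sum_Icc_succ_top (by omega : 1 ≤ n/2 + 1)]
      simp only [hodd, if_false]
      rw [show n/2 + 1 - 1 = n/2 by omega, h3,
        show Complex.I ^ (n+1) = ((Complex.I ^ 2) ^ (n/2 + 1)) by rw [← pow_mul, h3],
        Complex.I_sq, show ((-1:ℂ)) ^ (n/2+1) = -(-1:ℂ)^(n/2) by rw [pow_succ]; ring]
      simp

theorem stmt_18 (f : ℝ → ℝ) :
    ∀ t : ℝ, 0 ≤ t →
      ∑ s₂ ∈ Finset.Icc (1 : ℤ) ⌊t⌋, ∑ s₁ ∈ Finset.Icc (1 : ℤ) (⌊t⌋ - s₂),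
          (-1 : ℂ) ^ s₁ * Complex.I ^ (s₁ + s₂) * (f (t - (s₁ : ℝ) - (s₂ : ℝ)) : ℂ) =
        ∑ s ∈ Finset.Icc (1 : ℤ) ⌊t / 2⌋,
          (-1 : ℂ) ^ (s - 1) * (f (t - 2 * (s : ℝ)) : ℂ) := by
  intro t ht
  set n : ℕ := ⌊t⌋.toNat with hdef
  have hn : ((n : ℤ)) = ⌊t⌋ := Int.toNat_of_nonneg (Int.floor_nonneg.mpr ht)
  have h1 : ((n : ℤ) : ℝ) ≤ t := by rw [hn]; exact Int.floor_le t
  have h2 : t < ((n : ℤ) : ℝ) + 1 := by rw [hn]; exact Int.lt_floor_add_one t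
  have hfl : ⌊t / 2⌋ = ((n / 2 : ℕ) : ℤ) := by
    rw [Int.floor_eq_iff, Int.cast_natCast]
    push_cast at h1 h2
    have ha : (2 * (n / 2) : ℕ) ≤ n := by omega
    have hb : n ≤ 2 * (n / 2) + 1 := by omega
    have ha' : ((2 * (n / 2) : ℕ) : ℝ) ≤ (n : ℝ) := by exact_mod_cast ha
    have hb' : ((n : ℕ) : ℝ) ≤ ((2 * (n / 2) + 1 : ℕ) : ℝ) := by exact_mod_cast hb
    push_cast at ha' hb'
    constructor <;> [linarith; linarith]
  set g : ℕ → ℂ := fun k => (f (t - k) : ℂ) with hg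
  calc ∑ s₂ ∈ Finset.Icc (1 : ℤ) ⌊t⌋, ∑ s₁ ∈ Finset.Icc (1 : ℤ) (⌊t⌋ - s₂),
          (-1 : ℂ) ^ s₁ * Complex.I ^ (s₁ + s₂) * (f (t - (s₁ : ℝ) - (s₂ : ℝ)) : ℂ)
      = ∑ s₂ ∈ Icc 1 n, ∑ s₁ ∈ Icc 1 (n - s₂),
          (-1:ℂ)^s₁ * Complex.I^(s₁+s₂) * g (s₁+s₂) := by
        rw [← hn, int_sum_eq]
        refine Finset.sum_congr rfl fun s₂ hs₂ => ?_
        simp only [mem_Icc] at hs₂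
        rw [show (n:ℤ) - (s₂:ℤ) = ((n - s₂ : ℕ):ℤ) by omega, int_sum_eq]
        refine Finset.sum_congr rfl fun s₁ hs₁ => ?_
        rw [sub_sub, hg,
          show (s₁:ℤ) + (s₂:ℤ) = ((s₁ + s₂ : ℕ) : ℤ) by push_cast; ring,
          zpow_natCast, zpow_natCast]
        push_cast
        norm_num
    _ = ∑ s ∈ Icc 1 (n/2), (-1:ℂ)^(s-1) * g (2*s) := key g n
    _ = ∑ s ∈ Finset.Icc (1 : ℤ) ⌊t / 2⌋,
          (-1 : ℂ) ^ (s - 1) * (f (t - 2 * (s : ℝ)) : ℂ) := by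
        rw [hfl, int_sum_eq]
        refine Finset.sum_congr rfl fun s hs => ?_
        simp only [mem_Icc] at hs
        rw [show ((s:ℤ) - 1) = ((s - 1 : ℕ) : ℤ) by omega, hg]
        push_cast
        norm_num
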